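/- For arbitrary nonzero vectors ξ, η in ℝ^d, writing η∘ = η/|η| and π_ξ^⊥ for the orthogonal projection onto the orthogonal complement of span(ξ), one has max{|ξ|, |η|} · |π_ξ^⊥(η∘)| ≤ √2 · |ξ − η|. -/

import Mathlib

/-- For nonzero `ξ η : ℝ^d`, with `η∘ = η/|η|` and `π_ξ^⊥` the orthogonal projection onto the
orthogonal complement of `span ξ`, one has
`max |ξ| |η| * |π_ξ^⊥ (η∘)| ≤ √2 * |ξ - η|`. -/
theorem orthogonal_projection_distance {d : ℕ}
    (ξ η : EuclideanSpace ℝ (Fin d)) (hξ : ξ ≠ 0) (hη : η ≠ 0) :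
    max ‖ξ‖ ‖η‖ *
        Norm.norm ((‖η‖⁻¹ • η) -
          (inner ℝ (‖η‖⁻¹ • η) (‖ξ‖⁻¹ • ξ) : ℝ) • (‖ξ‖⁻¹ • ξ))
      ≤ Real.sqrt 2 * ‖ξ - η‖ := by
  set a := ‖ξ‖ with ha'
  set b := ‖η‖ with hb'
  have ha : 0 < a := norm_pos_iff.mpr hξ
  have hb : 0 < b := norm_pos_iff.mpr hη
  set u := ‖ξ‖⁻¹ • ξ with hu'
  set v := ‖η‖⁻¹ • η with hv'
  have hu : ‖u‖ = 1 := norm_smul_inv_norm hξ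
  have hv : ‖v‖ = 1 := norm_smul_inv_norm hη
  set c : ℝ := inner ℝ v u with hc'
  have hc1 : |c| ≤ 1 := by
    have := abs_real_inner_le_norm v u
    rwa [hu, hv, one_mul] at this
  have hw : ‖v - c • u‖ ^ 2 = 1 - c ^ 2 := by
    have h1 : ‖c • u‖ = |c| := by
      rw [norm_smul, hu, mul_one, Real.norm_eq_abs]
    rw [norm_sub_sq_real, hv, real_inner_smul_right, h1, ← hc', sq_abs]
    ring
  have hinner : (inner ℝ ξ η : ℝ) = a * b * c := by
    rw [hc', hu', hv', real_inner_smul_left, real_inner_smul_right,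
      real_inner_comm]
    rw [ha', hb']
    field_simp
  have hst : ‖ξ - η‖ ^ 2 = a ^ 2 - 2 * (a * b * c) + b ^ 2 := by
    rw [norm_sub_sq_real, hinner, ← ha', ← hb']
  have key : (max a b * ‖v - c • u‖) ^ 2 ≤ (Real.sqrt 2 * ‖ξ - η‖) ^ 2 := by
    rw [mul_pow, mul_pow, Real.sq_sqrt (by norm_num : (2:ℝ) ≥ 0), hw, hst]
    have hc2 : c ^ 2 ≤ 1 := by
      have := sq_abs c
      nlinarith [sq_abs c, abs_nonneg c]
    rcases max_cases a b with ⟨h1, h2⟩ | ⟨h1, h2⟩ <;> rw [h1]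
    · nlinarith [sq_nonneg (a * (1 - c) - (a - 2*b)), sq_nonneg (a - b),
        mul_nonneg (mul_nonneg ha.le (sub_nonneg.mpr (abs_le.mp hc1).2))
          (sub_nonneg.mpr h2), sq_nonneg (a*c - b)]
    · nlinarith [sq_nonneg (b * (1 - c) - (b - 2*a)), sq_nonneg (a - b),
        mul_nonneg (mul_nonneg hb.le (sub_nonneg.mpr (abs_le.mp hc1).2))
          (sub_nonneg.mpr h2.le), sq_nonneg (b*c - a)]
  have hL : 0 ≤ max a b * ‖v - c • u‖ :=
    mul_nonneg (le_trans ha.le (le_max_left a b)) (norm_nonneg _)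
  have hR : 0 ≤ Real.sqrt 2 * ‖ξ - η‖ :=
    mul_nonneg (Real.sqrt_nonneg 2) (norm_nonneg _)
  calc max a b * ‖v - c • u‖
      = Real.sqrt ((max a b * ‖v - c • u‖) ^ 2) := (Real.sqrt_sq hL).symm
    _ ≤ Real.sqrt ((Real.sqrt 2 * ‖ξ - η‖) ^ 2) := Real.sqrt_le_sqrt key
    _ = Real.sqrt 2 * ‖ξ - η‖ := Real.sqrt_sq hR
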